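/- Along solutions of the transformed Kharlamova system, the quantity γ_n² equals P_4(ω_1), a polynomial of degree at most 4 in ω_1 with coefficients determined by initial conditions; explicitly γ_n² = 1 − (B_1/(I_1+I_n))²γ_1(ω_1)² − Σ_{i=2}^{n-1}(B_i/(I_i+I_n))²(γ_1(ω_1)+γ_i(ω_1))², where γ_1(ω_1) = γ_1⁰ + (ω_1² − (ω_1⁰)²)/2 and γ_i(ω_1) = γ_i⁰ + ω_i⁰(ω_1 − ω_1⁰). -/

import Mathlib

/-- Along solutions of the transformed Kharlamova system, `γ_n²` equals a
polynomial of degree at most 4 in `ω_1` with coefficients determined by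
the initial conditions:
`γ_n² = 1 − (B_1/(I_1+I_n))² γ_1(ω_1)² − Σ_{i≥2} (B_i/(I_i+I_n))² (γ_1(ω_1)+γ_i(ω_1))²`,
where `γ_1(ω_1) = γ_1⁰ + (ω_1² − (ω_1⁰)²)/2` and `γ_i(ω_1) = γ_i⁰ + ω_i⁰(ω_1 − ω_1⁰)`. -/
theorem kharlamova_quartic (m : ℕ)
    (I : Fin (m + 1) → ℝ) (In : ℝ) (hI : ∀ i, 0 < I i) (hIn : 0 < In)
    (B : Fin (m + 1) → ℝ) (hB : ∀ i, B i ≠ 0)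
    (ω γ : Fin (m + 1) → ℝ → ℝ) (γn : ℝ → ℝ)
    (hω0 : ∀ t, HasDerivAt (ω 0) (γn t) t)
    (hωi : ∀ i, i ≠ 0 → ∀ t, HasDerivAt (ω i) 0 t)
    (hγ : ∀ i t, HasDerivAt (γ i) (γn t * ω i t) t)
    -- the constraint `⟨Γ,Γ⟩ = 1`, expressed in the new variables, holds along the flow:
    (hnorm : ∀ t, (γn t) ^ 2
      = 1 - (B 0 / (I 0 + In)) ^ 2 * (γ 0 t) ^ 2
          - ∑ i ∈ Finset.univ.erase 0,
              (B i / (I i + In)) ^ 2 * (γ 0 t + γ i t) ^ 2) :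
    ∀ t, (γn t) ^ 2
      = 1 - (B 0 / (I 0 + In)) ^ 2
              * (γ 0 0 + ((ω 0 t) ^ 2 - (ω 0 0) ^ 2) / 2) ^ 2
          - ∑ i ∈ Finset.univ.erase 0,
              (B i / (I i + In)) ^ 2
                * ((γ 0 0 + ((ω 0 t) ^ 2 - (ω 0 0) ^ 2) / 2)
                    + (γ i 0 + ω i 0 * (ω 0 t - ω 0 0))) ^ 2 := by
  -- ω i is constant for i ≠ 0
  have hωconst : ∀ i : Fin (m+1), i ≠ 0 → ∀ t, ω i t = ω i 0 := by
    intro i hi t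
    have : ∀ x, ω i x = ω i 0 := by
      have hd : ∀ x : ℝ, deriv (ω i) x = 0 := fun x => (hωi i hi x).deriv
      have := is_const_of_deriv_eq_zero (fun x => (hωi i hi x).differentiableAt) hd
      intro x; exact this x 0
    exact this t
  have hγ0 : ∀ t, γ 0 t = γ 0 0 + ((ω 0 t) ^ 2 - (ω 0 0) ^ 2) / 2 := by
    intro t
    set f : ℝ → ℝ := fun x => γ 0 x - (ω 0 x) ^ 2 / 2 with hf
    have hdf : ∀ x : ℝ, HasDerivAt f 0 x := by
      intro x
      have h1 := hγ 0 x
      have h2 : HasDerivAt (fun x => (ω 0 x) ^ 2 / 2) (γn x * ω 0 x) x := by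
        have := ((hω0 x).pow 2).div_const 2
        refine this.congr_deriv ?_
        ring
      have := h1.sub h2
      exact this.congr_deriv (sub_self _)
    have hconst := is_const_of_deriv_eq_zero
      (fun x => (hdf x).differentiableAt) (fun x => (hdf x).deriv)
    have := hconst t 0
    simp only [hf] at this
    linarith
  have hγi : ∀ i : Fin (m+1), i ≠ 0 → ∀ t, γ i t = γ i 0 + ω i 0 * (ω 0 t - ω 0 0) := by
    intro i hi t
    set f : ℝ → ℝ := fun x => γ i x - ω i 0 * ω 0 x with hf
    have hdf : ∀ x : ℝ, HasDerivAt f 0 x := by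
      intro x
      have h1 := hγ i x
      have h2 : HasDerivAt (fun x => ω i 0 * ω 0 x) (ω i 0 * γn x) x :=
        (hω0 x).const_mul _
      have h3 := h1.sub h2
      rw [hωconst i hi x] at h3
      refine h3.congr_deriv ?_
      ring
    have hconst := is_const_of_deriv_eq_zero
      (fun x => (hdf x).differentiableAt) (fun x => (hdf x).deriv)
    have := hconst t 0
    simp only [hf] at this
    linarith
  intro t
  rw [hnorm t, hγ0 t]
  congr 1
  apply Finset.sum_congr rfl
  intro i hi
  rw [hγi i (Finset.ne_of_mem_erase hi) t]
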